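/- Let X and Y be finite types, let f be a faithful X-Y embedding, let θ ⊆ Δ_X be an arbitrary constraint, and let D_X ⊆ Δ_X and D_Y ⊆ Δ_Y correspond under f. Then D_X|θ = ⋃_{μ ∈ D_X} μ|θ and D_Y|f*(θ) = ⋃_{ν ∈ D_Y} ν|f*(θ) also correspond under f. -/

import Mathlib

/-- A probability measure (probability mass function) on a finite type. -/
structure PM (X : Type) [Fintype X] where
  pm : X → ℝ
  nonneg : ∀ x, 0 ≤ pm x
  total : ∑ x, pm x = 1

namespace PM

variable {X Y : Type} [Fintype X] [Fintype Y]

/-- The probability of a set `S`: `μ(S) = ∑_{x ∈ S} μ(x)`. -/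
noncomputable def prob (μ : PM X) (S : Set X) : ℝ := ∑ x, S.indicator μ.pm x

lemma prob_nonneg (μ : PM X) (S : Set X) : 0 ≤ μ.prob S :=
  Finset.sum_nonneg fun x _ => Set.indicator_apply_nonneg fun _ => μ.nonneg x

/-- Marginal on the first component: `μ_X(A) = μ(A × Y)`. -/
noncomputable def margFst (μ : PM (X × Y)) : PM X where
  pm x := ∑ y, μ.pm (x, y)
  nonneg x := Finset.sum_nonneg fun y _ => μ.nonneg (x, y)
  total := by rw [← μ.total, ← Fintype.sum_prod_type]

/-- Marginal on the second component: `μ_Y(B) = μ(X × B)`. -/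
noncomputable def margSnd (μ : PM (X × Y)) : PM Y where
  pm y := ∑ x, μ.pm (x, y)
  nonneg y := Finset.sum_nonneg fun x _ => μ.nonneg (x, y)
  total := by rw [← μ.total, ← Fintype.sum_prod_type_right]

/-- Conditioning `μ|S`; the junk value `μ` is returned when `μ(S) = 0`. -/
noncomputable def cond (μ : PM X) (S : Set X) : PM X :=
  if h : 0 < μ.prob S then
    { pm := fun x => S.indicator μ.pm x / μ.prob S
      nonneg := fun x =>
        div_nonneg (Set.indicator_apply_nonneg fun _ => μ.nonneg x) (le_of_lt h)
      total := by
        rw [← Finset.sum_div]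
        exact div_self (ne_of_gt h) }
  else μ

end PM

open PM

/-- An `X`-inference procedure: a partial map on sets of probability measures. -/
structure InfProc (X : Type) [Fintype X] where
  dom : Set (Set (PM X))
  map : Set (PM X) → Set (PM X)
  map_subset : ∀ A ∈ dom, map A ⊆ A
  map_empty_iff : ∀ A ∈ dom, (map A = ∅ ↔ A = ∅)

/-- `KB ⊢_I θ`. -/
def Infers {X : Type} [Fintype X] (I : InfProc X) (KB θ : Set (PM X)) : Prop :=
  I.map KB ⊆ θ

section Lift

variable {X Y : Type} [Fintype X] [Fintype Y]

/-- A constraint on `Δ_X` viewed as a constraint on `Δ_{X×Y}`: `KB↑`. -/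
def liftKB (Y : Type) [Fintype Y] (KB : Set (PM X)) : Set (PM (X × Y)) :=
  {μ | margFst μ ∈ KB}

/-- `proj_X(B) = {μ_X : μ ∈ B}`. -/
def projFst (B : Set (PM (X × Y))) : Set (PM X) := margFst '' B

/-- `ψ ⊆ Δ_{X×Y}` is `X`-conservative over `KB ⊆ Δ_X`. -/
def Conservative (KB : Set (PM X)) (ψ : Set (PM (X × Y))) : Prop :=
  projFst (liftKB Y KB ∩ ψ) = KB

end Lift

/-- Robustness of a finitary inference procedure. -/
def Robust (I : ∀ (X : Type) [Fintype X], InfProc X) : Prop :=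
  ∀ (X Y : Type) [Fintype X] [Fintype Y], ∀ KB φ : Set (PM X),
    KB ∈ (I X).dom → ∀ ψ : Set (PM (X × Y)), Conservative KB ψ →
      (Infers (I X) KB φ ↔ Infers (I (X × Y)) (liftKB Y KB ∩ ψ) (liftKB Y φ))

/-- An inference procedure is essentially entailment. -/
def EssEntail {X : Type} [Fintype X] (I : InfProc X) : Prop :=
  ∀ KB ∈ I.dom, ∀ (S : Set X) (α β : ℝ),
    Infers I KB {μ | α < μ.prob S ∧ μ.prob S < β} →
    KB ⊆ {μ | α ≤ μ.prob S ∧ μ.prob S ≤ β}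

def DI1 (I : ∀ (X : Type) [Fintype X], InfProc X) : Prop :=
  ∀ (X : Type) [Fintype X], ∀ (S : Set X) (α β : ℝ), α ≤ β →
    {μ : PM X | α ≤ μ.prob S ∧ μ.prob S ≤ β} ∈ (I X).dom

def DI2 (I : ∀ (X : Type) [Fintype X], InfProc X) : Prop :=
  ∀ (X Y : Type) [Fintype X] [Fintype Y], ∀ KB : Set (PM X),
    KB ∈ (I X).dom → liftKB Y KB ∈ (I (X × Y)).dom

def DI3 (I : ∀ (X : Type) [Fintype X], InfProc X) : Prop :=
  ∀ (X : Type) [Fintype X], ∀ KB₁ KB₂ : Set (PM X),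
    KB₁ ∈ (I X).dom → KB₂ ∈ (I X).dom → KB₁ ∩ KB₂ ∈ (I X).dom

/-- An `X`-`Y` embedding: a homomorphism of set algebras. -/
structure Emb (X Y : Type) where
  f : Set X → Set Y
  map_union : ∀ S T, f (S ∪ T) = f S ∪ f T
  map_compl : ∀ S, f Sᶜ = (f S)ᶜ

/-- A faithful embedding. -/
def Emb.Faithful {X Y : Type} (e : Emb X Y) : Prop :=
  ∀ S T : Set X, S ⊆ T ↔ e.f S ⊆ e.f T

section Embeddings

variable {X Y : Type} [Fintype X] [Fintype Y]

/-- `μ` and `ν` correspond under `f`. -/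
def Corr (e : Emb X Y) (μ : PM X) (ν : PM Y) : Prop :=
  ∀ S : Set X, μ.prob S = ν.prob (e.f S)

/-- `f*(D)`, the union over `μ ∈ D` of the measures corresponding to `μ`. -/
def fstar (e : Emb X Y) (D : Set (PM X)) : Set (PM Y) :=
  {ν | ∃ μ ∈ D, Corr e μ ν}

/-- Sets of measures `D_X` and `D_Y` correspond under `f`. -/
def SetCorr (e : Emb X Y) (DX : Set (PM X)) (DY : Set (PM Y)) : Prop :=
  (∀ ν ∈ DY, ∃ μ ∈ DX, Corr e μ ν) ∧ (∀ μ ∈ DX, ∃ ν ∈ DY, Corr e μ ν)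

end Embeddings

/-- Representation independence of a finitary inference procedure. -/
def RepInd (I : ∀ (X : Type) [Fintype X], InfProc X) : Prop :=
  ∀ (X Y : Type) [Fintype X] [Fintype Y] (e : Emb X Y), e.Faithful →
    (∀ KB : Set (PM X), KB ∈ (I X).dom ↔ fstar e KB ∈ (I Y).dom) ∧
    (∀ KB : Set (PM X), KB ∈ (I X).dom → ∀ θ : Set (PM X),
      (Infers (I X) KB θ ↔ Infers (I Y) (fstar e KB) (fstar e θ)))

def DI4 (I : ∀ (X : Type) [Fintype X], InfProc X) : Prop :=
  ∀ (X Y : Type) [Fintype X] [Fintype Y] (e : Emb X Y), e.Faithful →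
    ∀ KB : Set (PM X), (KB ∈ (I X).dom ↔ fstar e KB ∈ (I Y).dom)

/-- `A ⇔ B` for sets of measures. -/
def iffSet {α : Type*} (A B : Set α) : Set α := (A ∩ B) ∪ (Aᶜ ∩ Bᶜ)

def DI5 (I : ∀ (X : Type) [Fintype X], InfProc X) : Prop :=
  ∀ (X Y : Type) [Fintype X] [Fintype Y] (KB : Set (PM (X × Y))) (e : Emb X Y),
    e.Faithful → KB ∈ (I (X × Y)).dom → ∀ φ₁ : Set (PM X),
      KB ∩ iffSet (liftKB Y φ₁) {μ | margSnd μ ∈ fstar e φ₁} ∈ (I (X × Y)).dom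

/-- Minimal default independence. -/
def MDI (I : ∀ (X : Type) [Fintype X], InfProc X) : Prop :=
  ∀ (X Y : Type) [Fintype X] [Fintype Y], ∀ KB : Set (PM X), ∀ (S : Set X) (T : Set Y),
    liftKB Y KB ∈ (I (X × Y)).dom →
    Infers (I (X × Y)) (liftKB Y KB)
      {μ | μ.prob (S ×ˢ T) = μ.prob (S ×ˢ (Set.univ : Set Y)) * μ.prob ((Set.univ : Set X) ×ˢ T)}

/-- `KB` depends only on `S₁, …, S_k`. -/
def DependsOnly {X : Type} [Fintype X] {k : ℕ} (KB : Set (PM X)) (S : Fin k → Set X) : Prop :=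
  ∀ μ μ' : PM X, (∀ i, μ.prob (S i) = μ'.prob (S i)) → (μ ∈ KB ↔ μ' ∈ KB)

/-- An atom over `S₁, …, S_k`. -/
def Atom {X : Type} {k : ℕ} (S : Fin k → Set X) (c : Fin k → Bool) : Set X :=
  ⋂ i, (if c i then S i else (S i)ᶜ)

section KL

variable {X : Type} [Fintype X]

/-- Absolute continuity of pmfs. -/
def AbsCont (μ' μ : PM X) : Prop := ∀ x, μ.pm x = 0 → μ'.pm x = 0

/-- Relative entropy `D(μ'‖μ) ∈ [0,∞]` (it is `⊤` unless `μ' ≪ μ`). -/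
noncomputable def KL (μ' μ : PM X) : EReal := by
  classical
  exact if AbsCont μ' μ then
    ((∑ x, μ'.pm x * Real.log (μ'.pm x / μ.pm x) : ℝ) : EReal)
  else ⊤

/-- The relative-entropy projection `μ|θ`. -/
def klProj (μ : PM X) (θ : Set (PM X)) : Set (PM X) :=
  {μ' | μ' ∈ θ ∧ KL μ' μ ≠ ⊤ ∧ ∀ μ'' ∈ θ, KL μ' μ ≤ KL μ'' μ}

/-- `D|θ = ⋃_{μ ∈ D} μ|θ`. -/
def DProj (D : Set (PM X)) (θ : Set (PM X)) : Set (PM X) :=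
  ⋃ μ ∈ D, klProj μ θ

end KL

section Products

variable {n : ℕ} {X : Fin n → Type} [∀ i, Fintype (X i)]

/-- The `i`-th marginal of a measure on a finite product. -/
noncomputable def margPi (μ : PM (∀ i, X i)) (i : Fin n) : PM (X i) where
  pm a := μ.prob {x | x i = a}
  nonneg a := PM.prob_nonneg _ _
  total := by
    classical
    unfold PM.prob
    rw [Finset.sum_comm]
    have h : ∀ x : (∀ i, X i),
        (∑ a, ({y : ∀ j, X j | y i = a}).indicator μ.pm x) = μ.pm x := by
      intro x
      simp [Set.indicator_apply]
    simp only [h]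
    exact μ.total

/-- `μ` is a product measure on `X₁ × ⋯ × Xₙ`. -/
def IsProdPM (μ : PM (∀ i, X i)) : Prop :=
  ∃ μi : ∀ i, PM (X i), ∀ U : ∀ i, Set (X i),
    μ.prob {x | ∀ i, x i ∈ U i} = ∏ i, (μi i).prob (U i)

end Products

/-- The set `P_Π(X)` of product measures. -/
def PPi {n : ℕ} (X : Fin n → Type) [∀ i, Fintype (X i)] : Set (PM (∀ i, X i)) :=
  {μ | IsProdPM μ}

/-- `e` is a product embedding. -/
def IsProdEmb {n : ℕ} {X Y : Fin n → Type} (e : Emb (∀ i, X i) (∀ i, Y i)) : Prop :=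
  ∃ ei : ∀ i, Emb (X i) (Y i), ∀ S : Set (∀ i, X i),
    e.f S = ⋃ x ∈ S, {y | ∀ i, y i ∈ (ei i).f {x i}}



open Classical in
lemma logSum {ι : Type*} (s : Finset ι) (a b : ι → ℝ)
    (ha : ∀ i ∈ s, 0 ≤ a i) (hb : ∀ i ∈ s, 0 ≤ b i)
    (hab : ∀ i ∈ s, b i = 0 → a i = 0) :
    (∑ i ∈ s, a i) * Real.log ((∑ i ∈ s, a i) / (∑ i ∈ s, b i)) ≤
      ∑ i ∈ s, a i * Real.log (a i / b i) := by
  set A := ∑ i ∈ s, a i with hA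
  set B := ∑ i ∈ s, b i with hB
  rcases eq_or_lt_of_le (Finset.sum_nonneg hb) with h0 | hBpos
  · -- B = 0
    have hb0 : ∀ i ∈ s, b i = 0 := by
      intro i hi
      exact (Finset.sum_eq_zero_iff_of_nonneg hb).mp h0.symm i hi
    have ha0 : ∀ i ∈ s, a i = 0 := fun i hi => hab i hi (hb0 i hi)
    have : A = 0 := Finset.sum_eq_zero ha0
    rw [this, zero_mul]
    refine Finset.sum_nonneg fun i hi => ?_
    rw [ha0 i hi]; simp
  · -- B > 0
    have hw : ∀ i ∈ s, 0 ≤ b i / B := fun i hi => div_nonneg (hb i hi) hBpos.le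
    have hw1 : ∑ i ∈ s, b i / B = 1 := by
      rw [← Finset.sum_div, ← hB, div_self (ne_of_gt hBpos)]
    have hp : ∀ i ∈ s, a i / b i ∈ Set.Ici (0:ℝ) := fun i hi =>
      div_nonneg (ha i hi) (hb i hi)
    have hj := Real.convexOn_mul_log.map_sum_le hw hw1 hp
    have hsum : ∑ i ∈ s, (b i / B) • (a i / b i) = A / B := by
      rw [hA, Finset.sum_div]
      refine Finset.sum_congr rfl fun i hi => ?_
      rcases eq_or_ne (b i) 0 with h | h
      · rw [h, hab i hi h]; simp
      · field_simp
        rw [smul_eq_mul, div_mul_div_comm, mul_comm (b i) (a i), mul_div_mul_right _ _ h]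
    rw [hsum] at hj
    have hrhs : ∑ i ∈ s, (b i / B) • ((fun x => x * Real.log x) (a i / b i))
        = (∑ i ∈ s, a i * Real.log (a i / b i)) / B := by
      rw [Finset.sum_div]
      refine Finset.sum_congr rfl fun i hi => ?_
      rcases eq_or_ne (b i) 0 with h | h
      · rw [h, hab i hi h]; simp
      · simp only [smul_eq_mul]
        field_simp
    rw [hrhs] at hj
    have := mul_le_mul_of_nonneg_left hj hBpos.le
    calc A * Real.log (A / B) = B * (A / B * Real.log (A / B)) := by
          have hB0 : B ≠ 0 := ne_of_gt hBpos
          field_simp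
      _ ≤ B * ((∑ i ∈ s, a i * Real.log (a i / b i)) / B) := this
      _ = ∑ i ∈ s, a i * Real.log (a i / b i) := by
          have hB0 : B ≠ 0 := ne_of_gt hBpos
          field_simp
section Stmt16Aux

open Classical

variable {X Y : Type} [Fintype X] [Fintype Y]

lemma PM.ext' {μ ν : PM X} (h : ∀ x, μ.pm x = ν.pm x) : μ = ν := by
  cases μ; cases ν; simp only [PM.mk.injEq]; exact funext h

/-- Pushforward of a pmf along a map. -/
noncomputable def pushPM (g : Y → X) (ν : PM Y) : PM X where
  pm x := ∑ y, if g y = x then ν.pm y else 0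
  nonneg x := Finset.sum_nonneg fun y _ => by
    split_ifs; exacts [ν.nonneg y, le_refl 0]
  total := by
    rw [Finset.sum_comm]
    rw [show ∑ y, ∑ x, (if g y = x then ν.pm y else 0) = ∑ y, ν.pm y from
      Finset.sum_congr rfl fun y _ => by simp]
    exact ν.total

lemma pushPM_pm (g : Y → X) (ν : PM Y) (x : X) :
    (pushPM g ν).pm x = ∑ y, if g y = x then ν.pm y else 0 := rfl

lemma sum_fiber (g : Y → X) (h : Y → ℝ) :
    ∑ x, ∑ y, (if g y = x then h y else 0) = ∑ y, h y := by
  rw [Finset.sum_comm]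
  exact Finset.sum_congr rfl fun y _ => by simp

lemma prob_preimage (g : Y → X) (ν : PM Y) (S : Set X) :
    ν.prob (g ⁻¹' S) = ∑ x, S.indicator (pushPM g ν).pm x := by
  unfold PM.prob
  have : ∀ x, S.indicator (pushPM g ν).pm x
      = ∑ y, if g y = x then (g ⁻¹' S).indicator ν.pm y else 0 := by
    intro x
    rw [Set.indicator_apply]
    split_ifs with hx
    · rw [pushPM_pm]
      refine Finset.sum_congr rfl fun y _ => ?_
      split_ifs with h
      · rw [Set.indicator_of_mem (by simpa [Set.mem_preimage, h] using hx)]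
      · rfl
    · rw [eq_comm]
      refine Finset.sum_eq_zero fun y _ => ?_
      split_ifs with h
      · rw [Set.indicator_of_notMem (by simpa [Set.mem_preimage, h] using hx)]
      · rfl
  simp only [this]
  exact (sum_fiber g _).symm

lemma corr_iff_push {e : Emb X Y} {g : Y → X} (hg : ∀ S, e.f S = g ⁻¹' S)
    (μ : PM X) (ν : PM Y) : Corr e μ ν ↔ μ = pushPM g ν := by
  constructor
  · intro hcorr
    refine PM.ext' fun x => ?_
    have h1 : μ.prob {x} = μ.pm x := by
      unfold PM.prob
      rw [show ∑ x', ({x} : Set X).indicator μ.pm x' = ∑ x', if x' = x then μ.pm x' else 0 from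
        Finset.sum_congr rfl fun x' _ => by simp [Set.indicator_apply]]
      simp
    have h2 := hcorr {x}
    rw [hg, prob_preimage] at h2
    rw [← h1, h2]
    rw [show ∑ x', ({x} : Set X).indicator (pushPM g ν).pm x'
        = ∑ x', if x' = x then (pushPM g ν).pm x' else 0 from
      Finset.sum_congr rfl fun x' _ => by simp [Set.indicator_apply]]
    simp
  · rintro rfl S
    rw [hg, prob_preimage]
    rfl

lemma absCont_push {g : Y → X} {ν' ν : PM Y} (h : AbsCont ν' ν) :
    AbsCont (pushPM g ν') (pushPM g ν) := by
  intro x hx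
  rw [pushPM_pm] at hx ⊢
  have hzero : ∀ y ∈ Finset.univ, (if g y = x then ν.pm y else 0) = 0 := by
    refine (Finset.sum_eq_zero_iff_of_nonneg fun y _ => ?_).mp hx
    split_ifs; exacts [ν.nonneg y, le_refl 0]
  refine Finset.sum_eq_zero fun y _ => ?_
  split_ifs with hgy
  · refine h y ?_
    have := hzero y (Finset.mem_univ y)
    simpa [hgy] using this
  · rfl

/-- Data processing inequality for pushforwards. -/
lemma KL_push_le (g : Y → X) (ν' ν : PM Y) :
    KL (pushPM g ν') (pushPM g ν) ≤ KL ν' ν := by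
  unfold KL
  split_ifs with h1 h2 h2
  · -- both abs cont : real inequality
    rw [EReal.coe_le_coe_iff]
    rw [← sum_fiber g (fun y => ν'.pm y * Real.log (ν'.pm y / ν.pm y))]
    refine Finset.sum_le_sum fun x _ => ?_
    have key := logSum (Finset.univ : Finset Y)
      (fun y => if g y = x then ν'.pm y else 0)
      (fun y => if g y = x then ν.pm y else 0)
      (fun y _ => by split_ifs; exacts [ν'.nonneg y, le_refl 0])
      (fun y _ => by split_ifs; exacts [ν.nonneg y, le_refl 0])
      (fun y _ => by
        split_ifs with hgy
        · exact h2 y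
        · exact fun _ => rfl)
    rw [← pushPM_pm, ← pushPM_pm] at key
    refine le_trans key (le_of_eq ?_)
    refine Finset.sum_congr rfl fun y _ => ?_
    split_ifs with hgy <;> simp [hgy]
  · exact le_top
  · -- AbsCont ν' ν but not pushforwards: impossible
    exact absurd (absCont_push h2) h1
  · exact le_top

end Stmt16Aux
section Stmt16Aux2

open Classical

variable {X Y : Type} [Fintype X] [Fintype Y]

lemma exists_lift (g : Y → X) (hsurj : Function.Surjective g) (μ' : PM X) (ν : PM Y) :
    ∃ ν' : PM Y, pushPM g ν' = μ' ∧ KL ν' ν = KL μ' (pushPM g ν) := by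
  set μ := pushPM g ν with hμ
  have hr : ∀ x, g (hsurj x).choose = x := fun x => (hsurj x).choose_spec
  set r : X → Y := fun x => (hsurj x).choose with hrdef
  set f : Y → ℝ := fun y =>
    if μ.pm (g y) = 0 then (if y = r (g y) then μ'.pm (g y) else 0)
    else ν.pm y * (μ'.pm (g y) / μ.pm (g y)) with hfdef
  have hfnonneg : ∀ y, 0 ≤ f y := by
    intro y
    rw [hfdef]
    dsimp only
    split_ifs
    · exact μ'.nonneg _
    · exact le_refl 0
    · exact mul_nonneg (ν.nonneg y) (div_nonneg (μ'.nonneg _) ((pushPM g ν).nonneg _))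
  have hfibν : ∀ x, (∑ y, if g y = x then ν.pm y else 0) = μ.pm x := fun x => rfl
  have hνzero : ∀ x, μ.pm x = 0 → ∀ y, g y = x → ν.pm y = 0 := by
    intro x hx y hgy
    have h0 : ∀ y' ∈ Finset.univ, (if g y' = x then ν.pm y' else 0) = 0 := by
      refine (Finset.sum_eq_zero_iff_of_nonneg fun y' _ => ?_).mp ((hfibν x).trans hx)
      split_ifs; exacts [ν.nonneg y', le_refl 0]
    have := h0 y (Finset.mem_univ y)
    simpa [hgy] using this
  have hfib : ∀ x, (∑ y, if g y = x then f y else 0) = μ'.pm x := by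
    intro x
    rcases eq_or_ne (μ.pm x) 0 with h | h
    · have heach : ∀ y, (if g y = x then f y else 0) = (if y = r x then μ'.pm x else 0) := by
        intro y
        rcases eq_or_ne y (r x) with hy | hy
        · subst hy
          rw [if_pos (hr x), if_pos rfl, hfdef]
          dsimp only
          rw [hr x, if_pos h, if_pos rfl]
        · rw [if_neg hy]
          split_ifs with hgy
          · rw [hfdef]
            dsimp only
            rw [if_pos (by rw [hgy]; exact h), if_neg (by rw [hgy]; exact hy)]
          · rfl
      rw [Finset.sum_congr rfl fun y _ => heach y]
      simp
    · have heach : ∀ y, (if g y = x then f y else 0)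
          = (if g y = x then ν.pm y else 0) * (μ'.pm x / μ.pm x) := by
        intro y
        split_ifs with hgy
        · rw [hfdef]; dsimp only; rw [hgy, if_neg h]
        · rw [zero_mul]
      rw [Finset.sum_congr rfl fun y _ => heach y, ← Finset.sum_mul, hfibν,
        mul_div_assoc', mul_comm, mul_div_assoc, div_self h, mul_one]
  refine ⟨⟨f, hfnonneg, ?_⟩, ?_, ?_⟩
  · rw [← sum_fiber g f]
    rw [Finset.sum_congr rfl fun x _ => hfib x]
    exact μ'.total
  · exact PM.ext' fun x => hfib x
  · -- KL equality
    have hdir1 : AbsCont μ' μ → AbsCont ⟨f, hfnonneg, by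
        rw [← sum_fiber g f, Finset.sum_congr rfl fun x _ => hfib x]; exact μ'.total⟩ ν := by
      intro hac y hy
      show f y = 0
      rw [hfdef]
      dsimp only
      split_ifs with h1 h2
      · exact hac _ h1
      · rfl
      · rw [hy, zero_mul]
    have hdir2 : ¬ AbsCont μ' μ → ∃ y, ν.pm y = 0 ∧ f y ≠ 0 := by
      intro hnac
      rw [AbsCont] at hnac
      push_neg at hnac
      obtain ⟨x, hx0, hx'⟩ := hnac
      refine ⟨r x, hνzero x hx0 (r x) (hr x), ?_⟩
      rw [hfdef]
      dsimp only
      rw [hr x, if_pos hx0, if_pos rfl]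
      exact hx'
    unfold KL
    split_ifs with h1 h2 h2
    · -- both: real equality
      congr 1
      rw [← sum_fiber g (fun y => f y * Real.log (f y / ν.pm y))]
      refine Finset.sum_congr rfl fun x _ => ?_
      rcases eq_or_ne (μ.pm x) 0 with h | h
      · have hx' : μ'.pm x = 0 := h2 x h
        rw [hx', zero_mul]
        refine Finset.sum_eq_zero fun y _ => ?_
        split_ifs with hgy
        · have hf0 : f y = 0 := by
            rw [hfdef]
            dsimp only
            rw [hgy, if_pos h]
            split_ifs
            · exact hx'
            · rfl
          rw [hf0, zero_mul]
        · rfl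
      · set c : ℝ := μ'.pm x / μ.pm x with hc
        have heach : ∀ y, (if g y = x then f y * Real.log (f y / ν.pm y) else 0)
            = (if g y = x then ν.pm y else 0) * (c * Real.log c) := by
          intro y
          split_ifs with hgy
          · have hfy : f y = ν.pm y * c := by
              rw [hfdef]; dsimp only; rw [hgy, if_neg h]
            rcases eq_or_ne (ν.pm y) 0 with hν0 | hν0
            · rw [hfy, hν0, zero_mul, zero_mul, zero_mul]
            · rw [hfy, mul_comm (ν.pm y) c, mul_div_assoc, div_self hν0, mul_one]
              ring
          · rw [zero_mul]
        rw [Finset.sum_congr rfl fun y _ => heach y, ← Finset.sum_mul, hfibν,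
          ← mul_assoc, mul_div_assoc', mul_comm (μ.pm x) (μ'.pm x), mul_div_assoc,
          div_self h, mul_one]
    · obtain ⟨y, hy0, hfy⟩ := hdir2 h2
      exact absurd (h1 y hy0) hfy
    · exact absurd (hdir1 h2) h1
    · rfl

lemma emb_exists_g (e : Emb X Y) (hf : e.Faithful) :
    ∃ g : Y → X, Function.Surjective g ∧ ∀ S, e.f S = g ⁻¹' S := by
  have hU : e.f Set.univ = Set.univ := by
    have h := e.map_union ∅ ∅ᶜ
    rw [Set.union_compl_self, e.map_compl] at h
    rw [h, Set.union_compl_self]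
  have hE : e.f ∅ = ∅ := by
    have h := e.map_compl Set.univ
    rw [Set.compl_univ] at h
    rw [h, hU, Set.compl_univ]
  have hI : ∀ S T : Set X, e.f (S ∩ T) = e.f S ∩ e.f T := by
    intro S T
    have h : S ∩ T = (Sᶜ ∪ Tᶜ)ᶜ := by rw [Set.compl_union, compl_compl, compl_compl]
    rw [h, e.map_compl, e.map_union, e.map_compl, e.map_compl, Set.compl_union,
      compl_compl, compl_compl]
  have hUnion : ∀ S : Set X, e.f S = ⋃ x ∈ S, e.f {x} := by
    intro S
    have key : ∀ s : Finset X, e.f ↑s = ⋃ x ∈ s, e.f {x} := by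
      intro s
      induction s using Finset.induction_on with
      | empty => simp [hE]
      | @insert a s ha ih =>
        rw [Finset.coe_insert, Set.insert_eq, e.map_union, ih, Finset.set_biUnion_insert]
    have h := key S.toFinset
    rw [Set.coe_toFinset] at h
    rw [h]
    ext y
    simp [Set.mem_toFinset]
  have hne : ∀ x : X, (e.f {x}).Nonempty := by
    intro x
    rw [Set.nonempty_iff_ne_empty]
    intro h
    have hsub : e.f {x} ⊆ e.f ∅ := by rw [h, hE]
    have := (hf {x} ∅).mpr hsub
    simpa using this
  have hdisj : ∀ x x' : X, x ≠ x' → e.f {x} ∩ e.f {x'} = ∅ := by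
    intro x x' hxx
    rw [← hI, show ({x} : Set X) ∩ {x'} = ∅ from by simp [hxx.symm], hE]
  have hexx : ∀ y : Y, ∃ x : X, y ∈ e.f {x} := by
    intro y
    have hy : y ∈ e.f Set.univ := by rw [hU]; trivial
    rw [hUnion] at hy
    simpa using hy
  choose g hgmem using hexx
  have huniq : ∀ y x, y ∈ e.f {x} → g y = x := by
    intro y x hy
    by_contra hne'
    have h := hdisj (g y) x hne'
    exact absurd (Set.mem_inter (hgmem y) hy) (by rw [h]; exact Set.notMem_empty y)
  refine ⟨g, fun x => ?_, fun S => ?_⟩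
  · obtain ⟨y, hy⟩ := hne x
    exact ⟨y, huniq y x hy⟩
  · rw [hUnion]
    ext y
    simp only [Set.mem_iUnion, Set.mem_preimage]
    constructor
    · rintro ⟨x, hxS, hy⟩
      rw [huniq y x hy]; exact hxS
    · intro h
      exact ⟨g y, h, hgmem y⟩

end Stmt16Aux2

/-- relative-entropy projection of corresponding sets of
measures yields corresponding sets. -/
theorem stmt16 {X Y : Type} [Fintype X] [Fintype Y] (e : Emb X Y)
    (hf : e.Faithful) (θ : Set (PM X)) (DX : Set (PM X)) (DY : Set (PM Y))
    (hc : SetCorr e DX DY) :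
    SetCorr e (DProj DX θ) (DProj DY (fstar e θ)) := by
  classical
  obtain ⟨g, hsurj, hg⟩ := emb_exists_g e hf
  constructor
  · rintro ν' hν'
    simp only [DProj, Set.mem_iUnion] at hν'
    obtain ⟨ν, hνDY, hν'θ, hν'fin, hν'min⟩ := hν'
    obtain ⟨μ', hμ'θ, hcorr'⟩ := hν'θ
    obtain ⟨μ, hμDX, hcorr⟩ := hc.1 ν hνDY
    have hμ : μ = pushPM g ν := (corr_iff_push hg μ ν).mp hcorr
    have hμ'p : μ' = pushPM g ν' := (corr_iff_push hg μ' ν').mp hcorr'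
    have hdpi : KL μ' μ ≤ KL ν' ν := by rw [hμ, hμ'p]; exact KL_push_le g ν' ν
    refine ⟨μ', ?_, hcorr'⟩
    simp only [DProj, Set.mem_iUnion]
    refine ⟨μ, hμDX, hμ'θ, ?_, ?_⟩
    · intro htop
      exact hν'fin (top_le_iff.mp (htop ▸ hdpi))
    · intro μ'' hμ''θ
      obtain ⟨ν'', hpush'', hKL''⟩ := exists_lift g hsurj μ'' ν
      have hcorr'' : Corr e μ'' ν'' := (corr_iff_push hg μ'' ν'').mpr hpush''.symm
      calc KL μ' μ ≤ KL ν' ν := hdpi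
        _ ≤ KL ν'' ν := hν'min ν'' ⟨μ'', hμ''θ, hcorr''⟩
        _ = KL μ'' (pushPM g ν) := hKL''
        _ = KL μ'' μ := by rw [hμ]
  · rintro μ' hμ'
    simp only [DProj, Set.mem_iUnion] at hμ'
    obtain ⟨μ, hμDX, hμ'θ, hμ'fin, hμ'min⟩ := hμ'
    obtain ⟨ν, hνDY, hcorr⟩ := hc.2 μ hμDX
    have hμ : μ = pushPM g ν := (corr_iff_push hg μ ν).mp hcorr
    obtain ⟨ν', hpush', hKL'⟩ := exists_lift g hsurj μ' ν
    have hcorr' : Corr e μ' ν' := (corr_iff_push hg μ' ν').mpr hpush'.symm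
    have hKLeq : KL ν' ν = KL μ' μ := by rw [hKL', ← hμ]
    refine ⟨ν', ?_, hcorr'⟩
    simp only [DProj, Set.mem_iUnion]
    refine ⟨ν, hνDY, ⟨μ', hμ'θ, hcorr'⟩, ?_, ?_⟩
    · rw [hKLeq]; exact hμ'fin
    · intro ν'' hν''
      obtain ⟨μ'', hμ''θ, hcorr''⟩ := hν''
      have hμ'' : μ'' = pushPM g ν'' := (corr_iff_push hg μ'' ν'').mp hcorr''
      calc KL ν' ν = KL μ' μ := hKLeq
        _ ≤ KL μ'' μ := hμ'min μ'' hμ''θ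
        _ ≤ KL ν'' ν := by rw [hμ'', hμ]; exact KL_push_le g ν'' ν
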